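/- Let F be a left R-module and G an S-R-bimodule such that Tor_1^R(G, F) = 0. Then for every left S-module M there is an injective map of abelian groups Ext^1_R(F, Hom_S(G, M)) → Ext^1_S(G ⊗_R F, M). -/

import Mathlib

universe u

noncomputable section

open CategoryTheory

variable {R S : Type u} [CommRing R] [CommRing S]

/-- The `R`-module structure on `Hom_S(G, M)` coming from the right `R`-module
structure of the `S`-`R`-bimodule `G`. -/
instance homModule (G : Type u) [AddCommGroup G] [Module S G] [Module R G]
    [SMulCommClass R S G] (M : Type u) [AddCommGroup M] [Module S M] :
    Module R (G →ₗ[S] M) where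
  smul r f := f ∘ₗ DistribMulAction.toLinearMap S G r
  one_smul f := by
    ext g
    show f ((1 : R) • g) = f g
    rw [one_smul]
  mul_smul r r' f := by
    ext g
    show f ((r * r') • g) = f (r' • r • g)
    rw [← mul_smul, mul_comm]
  smul_zero r := by ext g; rfl
  smul_add r f f' := by ext g; rfl
  add_smul r r' f := by
    ext g
    show f ((r + r') • g) = f (r • g) + f (r' • g)
    rw [add_smul, map_add]
  zero_smul f := by
    ext g
    show f ((0 : R) • g) = 0
    rw [zero_smul, map_zero]

section Aux

variable (S)
variable (G : Type u) [AddCommGroup G] [Module S G] [Module R G] [SMulCommClass R S G]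
variable (M : Type u) [AddCommGroup M] [Module S M]
variable {P P' : Type u} [AddCommGroup P] [Module R P] [AddCommGroup P'] [Module R P']

/-- `lTensor` as an `S`-linear map. -/
def lS (d : P →ₗ[R] P') : TensorProduct R G P →ₗ[S] TensorProduct R G P' where
  toFun := LinearMap.lTensor G d
  map_add' := map_add _
  map_smul' s x := by
    induction x using TensorProduct.induction_on with
    | zero => simp
    | tmul g p => simp [TensorProduct.smul_tmul']
    | add x y hx hy => simp only [map_add, smul_add, RingHom.id_apply] at hx hy ⊢; rw [hx, hy]

@[simp] lemma lS_tmul (d : P →ₗ[R] P') (g : G) (p : P) :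
    lS S G d (g ⊗ₜ[R] p) = g ⊗ₜ[R] d p := rfl

lemma lS_coe (d : P →ₗ[R] P') : ⇑(lS S G d) = ⇑(LinearMap.lTensor G d) := rfl

/-- uncurrying, the tensor-hom adjunction. -/
def unc (u : P →ₗ[R] (G →ₗ[S] M)) : TensorProduct R G P →ₗ[S] M where
  toFun := TensorProduct.liftAddHom
    { toFun := fun g =>
        { toFun := fun p => u p g
          map_zero' := by simp
          map_add' := fun p p' => by simp }
      map_zero' := by ext p; simp
      map_add' := fun g g' => by ext p; simp }
    (fun r g p => by
      show u p (r • g) = u (r • p) g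
      rw [u.map_smul]
      rfl)
  map_add' := map_add _
  map_smul' s x := by
    induction x using TensorProduct.induction_on with
    | zero => simp
    | tmul g p =>
        show TensorProduct.liftAddHom _ _ (s • g ⊗ₜ[R] p) = s • TensorProduct.liftAddHom _ _ _
        rw [TensorProduct.smul_tmul', TensorProduct.liftAddHom_tmul,
          TensorProduct.liftAddHom_tmul]
        exact map_smul (u p) s g
    | add x y hx hy => simp only [map_add, smul_add, RingHom.id_apply] at hx hy ⊢; rw [hx, hy]

@[simp] lemma unc_tmul (u : P →ₗ[R] (G →ₗ[S] M)) (g : G) (p : P) :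
    unc S G M u (g ⊗ₜ[R] p) = u p g := rfl

lemma Sext {N : Type u} [AddCommGroup N] [Module S N]
    {f g : TensorProduct R G P →ₗ[S] N} (h : ∀ a b, f (a ⊗ₜ[R] b) = g (a ⊗ₜ[R] b)) : f = g := by
  ext x
  induction x using TensorProduct.induction_on with
  | zero => simp
  | tmul a b => exact h a b
  | add x y hx hy => rw [map_add, map_add, hx, hy]

lemma unc_comp_lS (u : P' →ₗ[R] (G →ₗ[S] M)) (d : P →ₗ[R] P') :
    (unc S G M u).comp (lS S G d) = unc S G M (u.comp d) :=
  Sext S G (fun a b => by simp)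

lemma unc_add (u v : P →ₗ[R] (G →ₗ[S] M)) :
    unc S G M (u + v) = unc S G M u + unc S G M v :=
  Sext S G (fun a b => by simp)

lemma unc_zero : unc S G M (0 : P →ₗ[R] (G →ₗ[S] M)) = 0 :=
  Sext S G (fun a b => by simp)

/-- currying -/
def cur (c : TensorProduct R G P →ₗ[S] M) : P →ₗ[R] (G →ₗ[S] M) where
  toFun p :=
    { toFun := fun g => c (g ⊗ₜ[R] p)
      map_add' := fun g g' =>
        show c ((g + g') ⊗ₜ[R] p) = c (g ⊗ₜ[R] p) + c (g' ⊗ₜ[R] p) by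
          rw [TensorProduct.add_tmul, map_add]
      map_smul' := fun s g =>
        show c ((s • g) ⊗ₜ[R] p) = s • c (g ⊗ₜ[R] p) by
          rw [← TensorProduct.smul_tmul', map_smul] }
  map_add' p p' := by ext g; simp [TensorProduct.tmul_add]
  map_smul' r p := by
    ext g
    show c (g ⊗ₜ (r • p)) = c ((r • g) ⊗ₜ p)
    rw [TensorProduct.smul_tmul]

lemma unc_cur (c : TensorProduct R G P →ₗ[S] M) : unc S G M (cur S G M c) = c :=
  Sext S G (fun a b => by rw [unc_tmul]; rfl)

lemma unc_injective :
    Function.Injective (unc S G M : (P →ₗ[R] (G →ₗ[S] M)) → TensorProduct R G P →ₗ[S] M) := by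
  intro u v h
  ext p g
  have := congrArg (fun f => f (g ⊗ₜ[R] p)) h
  simpa using this

/-- exactness of `P₁ → P₀ → X → 0` for a projective resolution in `ModuleCat`. -/
lemma resol_ker_eq_range {A : Type u} [CommRing A] {X : ModuleCat.{u} A}
    (Pr : ProjectiveResolution X) :
    LinearMap.ker ((Pr.π.f 0).hom : Pr.complex.X 0 →ₗ[A] X) =
      LinearMap.range ((Pr.complex.d 1 0).hom : Pr.complex.X 1 →ₗ[A] Pr.complex.X 0) := by
  let e := Limits.IsColimit.coconePointUniqueUpToIso
    (ModuleCat.cokernelIsColimit (Pr.complex.d 1 0)) Pr.isColimitCokernelCofork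
  have h1 := Limits.IsColimit.comp_coconePointUniqueUpToIso_hom
    (ModuleCat.cokernelIsColimit (Pr.complex.d 1 0)) Pr.isColimitCokernelCofork
    Limits.WalkingParallelPair.one
  have h2 : ∀ x, Pr.π.f 0 x =
      e.hom ((LinearMap.range ((Pr.complex.d 1 0).hom : Pr.complex.X 1 →ₗ[A] Pr.complex.X 0)).mkQ x) :=
    fun x => (ConcreteCategory.congr_hom h1 x).symm
  have hinj : Function.Injective e.hom :=
    (ModuleCat.mono_iff_injective e.hom).1 inferInstance
  ext x
  constructor
  · intro hx
    have : e.hom ((LinearMap.range ((Pr.complex.d 1 0).hom : _ →ₗ[A] _)).mkQ x) = 0 := by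
      rw [← h2]; exact hx
    have h0 : (LinearMap.range ((Pr.complex.d 1 0).hom : _ →ₗ[A] _)).mkQ x = 0 := by
      apply hinj; rw [this]; exact (map_zero e.hom.hom).symm
    rwa [← LinearMap.mem_ker, Submodule.ker_mkQ] at h0
  · intro hx
    have h0 : (LinearMap.range ((Pr.complex.d 1 0).hom : _ →ₗ[A] _)).mkQ x = 0 := by
      rwa [← LinearMap.mem_ker, Submodule.ker_mkQ]
    rw [LinearMap.mem_ker, h2, h0]; exact map_zero e.hom.hom

end Aux

/-- The first Ext group of two `A`-modules. -/
abbrev ext1 (A : Type u) [CommRing A] (X Y : ModuleCat.{u} A) : Type u :=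
  ((Ext A (ModuleCat.{u} A) 1).obj (Opposite.op X)).obj Y

set_option maxHeartbeats 1000000 in
set_option synthInstance.maxHeartbeats 400000 in
/-- let `F` be a left `R`-module, `G` an `S`-`R`-bimodule with
`Tor_1^R(G, F) = 0`. Then for every left `S`-module `M` there is an injective map of
abelian groups `Ext¹_R(F, Hom_S(G, M)) → Ext¹_S(G ⊗_R F, M)`. -/
theorem stmt2 (F : Type u) [AddCommGroup F] [Module R F]
    (G : Type u) [AddCommGroup G] [Module S G] [Module R G] [SMulCommClass R S G]
    (htor : Subsingleton
      (((Tor (ModuleCat.{u} R) 1).obj (ModuleCat.of R G)).obj (ModuleCat.of R F)))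
    (M : Type u) [AddCommGroup M] [Module S M] :
    ∃ φ : ext1 R (ModuleCat.of R F) (ModuleCat.of R (G →ₗ[S] M)) →+
        ext1 S (ModuleCat.of S (TensorProduct R G F)) (ModuleCat.of S M),
      Function.Injective φ := by
  classical
  -- projective resolutions
  let P : ProjectiveResolution (ModuleCat.of R F) := ProjectiveResolution.of _
  let Q : ProjectiveResolution (ModuleCat.of S (TensorProduct R G F)) :=
    ProjectiveResolution.of _
  let dP1 : (P.complex.X 1 : Type u) →ₗ[R] (P.complex.X 0 : Type u) := (P.complex.d 1 0).hom
  let dP2 : (P.complex.X 2 : Type u) →ₗ[R] (P.complex.X 1 : Type u) := (P.complex.d 2 1).hom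
  let pi0 : (P.complex.X 0 : Type u) →ₗ[R] F := (P.π.f 0).hom
  let dQ1 : (Q.complex.X 1 : Type u) →ₗ[S] (Q.complex.X 0 : Type u) := (Q.complex.d 1 0).hom
  let dQ2 : (Q.complex.X 2 : Type u) →ₗ[S] (Q.complex.X 1 : Type u) := (Q.complex.d 2 1).hom
  let εQ : (Q.complex.X 0 : Type u) →ₗ[S] TensorProduct R G F := (Q.π.f 0).hom
  have hpi0sur : Function.Surjective pi0 :=
    (ModuleCat.epi_iff_surjective (P.π.f 0)).1 inferInstance
  have hQsur : Function.Surjective εQ :=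
    (ModuleCat.epi_iff_surjective (Q.π.f 0)).1 inferInstance
  have hQker : ∀ q, εQ q = 0 → ∃ y, dQ1 y = q := by
    intro q hq
    have : q ∈ LinearMap.ker ((Q.π.f 0).hom : Q.complex.X 0 →ₗ[S] _) := hq
    rw [resol_ker_eq_range Q] at this
    exact this
  -- the tensored complex and its exactness in degree 1 (via Tor vanishing)
  let T := (MonoidalCategory.tensoringLeft (ModuleCat.{u} R)).obj (ModuleCat.of R G)
  let Cc := (T.mapHomologicalComplex (ComplexShape.down ℕ)).obj P.complex
  haveI hsub : Subsingleton ((T.leftDerived 1).obj (ModuleCat.of R F) : Type u) := htor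
  have hzero : Limits.IsZero ((T.leftDerived 1).obj (ModuleCat.of R F)) :=
    ModuleCat.isZero_of_subsingleton _
  have hTor : Limits.IsZero (Cc.homology 1) :=
    hzero.of_iso (P.isoLeftDerivedObj T 1).symm
  have hCex : Cc.ExactAt 1 := (Cc.exactAt_iff_isZero_homology 1).2 hTor
  have hC1 : LinearMap.range (Cc.d 2 1).hom = LinearMap.ker (Cc.d 1 0).hom :=
    ((Cc.exactAt_iff' 2 1 0 (by simp) (by simp)).1 hCex).moduleCat_range_eq_ker
  have hd : ∀ (i j : ℕ) (x : TensorProduct R G (P.complex.X i)),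
      Cc.d i j x = LinearMap.lTensor G (P.complex.d i j).hom x := by
    intro i j x
    induction x using TensorProduct.induction_on with
    | zero =>
        show (Cc.d i j).hom (0 : Cc.X i) = LinearMap.lTensor G (P.complex.d i j).hom 0
        rw [map_zero, map_zero]
        rfl
    | tmul g p =>
        rw [LinearMap.lTensor_tmul]
        exact ModuleCat.MonoidalCategory.whiskerLeft_apply (ModuleCat.of R G)
          (P.complex.d i j) g p
    | add x y hx hy =>
        exact (map_add (Cc.d i j).hom (x : Cc.X i) y).trans
          ((congrArg₂ (· + ·) hx hy).trans (map_add _ x y).symm)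
  -- `S`-linear versions of the tensored maps
  let εS : TensorProduct R G (P.complex.X 0) →ₗ[S] TensorProduct R G F := lS S G pi0
  let d1S : TensorProduct R G (P.complex.X 1) →ₗ[S] TensorProduct R G (P.complex.X 0) :=
    lS S G dP1
  let d2S : TensorProduct R G (P.complex.X 2) →ₗ[S] TensorProduct R G (P.complex.X 1) :=
    lS S G dP2
  have hPex : Function.Exact dP1 pi0 := LinearMap.exact_iff.mpr (resol_ker_eq_range P)
  have hC0 : Function.Exact d1S εS := by
    rw [show ⇑d1S = ⇑(LinearMap.lTensor G dP1) from rfl,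
      show ⇑εS = ⇑(LinearMap.lTensor G pi0) from rfl]
    exact lTensor_exact G hPex hpi0sur
  have hεSsur : Function.Surjective εS := by
    rw [show ⇑εS = ⇑(LinearMap.lTensor G pi0) from rfl]
    exact LinearMap.lTensor_surjective G hpi0sur
  have hex1 : ∀ x, d1S x = 0 → ∃ y, d2S y = x := by
    intro x hx
    have hmem : @id (Cc.X 1) x ∈ LinearMap.ker (Cc.d 1 0).hom := LinearMap.mem_ker.2 ((hd 1 0 x).trans hx)
    rw [← hC1] at hmem
    obtain ⟨y, hy⟩ := hmem
    exact ⟨y, (hd 2 1 y).symm.trans hy⟩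
  have hd21zero : dP1.comp dP2 = 0 := by
    ext p
    exact ConcreteCategory.congr_hom (P.complex.d_comp_d 2 1 0) p
  have hQd21zero : ∀ q, dQ1 (dQ2 q) = 0 := by
    intro q
    exact ConcreteCategory.congr_hom (Q.complex.d_comp_d 2 1 0) q
  have hQεd : ∀ q, εQ (dQ1 q) = 0 := by
    intro q
    exact ConcreteCategory.congr_hom Q.complex_d_comp_π_f_zero q
  -- lift the identity of `G ⊗ F` to the comparison maps `f₀, f₁, f₂`
  haveI hp0 : Projective (ModuleCat.of S ((Q.complex.X 0 : Type u))) := Q.projective 0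
  haveI hp1 : Projective (ModuleCat.of S ((Q.complex.X 1 : Type u))) := Q.projective 1
  haveI hp2 : Projective (ModuleCat.of S ((Q.complex.X 2 : Type u))) := Q.projective 2
  haveI hmp0 : Module.Projective S (Q.complex.X 0 : Type u) :=
    (IsProjective.iff_projective.{u, u} _).2 hp0
  haveI hmp1 : Module.Projective S (Q.complex.X 1 : Type u) :=
    (IsProjective.iff_projective.{u, u} _).2 hp1
  haveI hmp2 : Module.Projective S (Q.complex.X 2 : Type u) :=
    (IsProjective.iff_projective.{u, u} _).2 hp2
  obtain ⟨f₀, hf₀⟩ := Module.projective_lifting_property εS εQ hεSsur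
  have hf₀e : ∀ q, εS (f₀ q) = εQ q := DFunLike.congr_fun hf₀
  -- f₁
  let K1 : Submodule S (TensorProduct R G (P.complex.X 0)) := LinearMap.ker εS
  let δ1 : TensorProduct R G (P.complex.X 1) →ₗ[S] K1 :=
    d1S.codRestrict K1 (fun x => LinearMap.mem_ker.2 ((hC0 (d1S x)).mpr ⟨x, rfl⟩))
  have hδ1sur : Function.Surjective δ1 := by
    rintro ⟨k, hk⟩
    obtain ⟨y, hy⟩ := (hC0 k).mp (LinearMap.mem_ker.1 hk)
    exact ⟨y, Subtype.ext hy⟩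
  let g1 : (Q.complex.X 1 : Type u) →ₗ[S] K1 :=
    (f₀.comp dQ1).codRestrict K1 (fun q => LinearMap.mem_ker.2 (by
      show εS (f₀ (dQ1 q)) = 0
      rw [hf₀e, hQεd]))
  obtain ⟨f₁, hf₁⟩ := Module.projective_lifting_property δ1 g1 hδ1sur
  have hf₁e : ∀ q, d1S (f₁ q) = f₀ (dQ1 q) := fun q =>
    congrArg Subtype.val (DFunLike.congr_fun hf₁ q)
  -- f₂
  let K2 : Submodule S (TensorProduct R G (P.complex.X 1)) := LinearMap.ker d1S
  have hd1d2 : ∀ x, d1S (d2S x) = 0 := by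
    intro x
    show LinearMap.lTensor G dP1 (LinearMap.lTensor G dP2 x) = 0
    rw [← LinearMap.lTensor_comp_apply, hd21zero, LinearMap.lTensor_zero]
    rfl
  let δ2 : TensorProduct R G (P.complex.X 2) →ₗ[S] K2 :=
    d2S.codRestrict K2 (fun x => LinearMap.mem_ker.2 (hd1d2 x))
  have hδ2sur : Function.Surjective δ2 := by
    rintro ⟨k, hk⟩
    obtain ⟨y, hy⟩ := hex1 k (LinearMap.mem_ker.1 hk)
    exact ⟨y, Subtype.ext hy⟩
  let g2 : (Q.complex.X 2 : Type u) →ₗ[S] K2 :=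
    (f₁.comp dQ2).codRestrict K2 (fun q => LinearMap.mem_ker.2 (by
      show d1S (f₁ (dQ2 q)) = 0
      rw [hf₁e, hQd21zero, map_zero]))
  obtain ⟨f₂, hf₂⟩ := Module.projective_lifting_property δ2 g2 hδ2sur
  have hf₂e : ∀ q, d2S (f₂ q) = f₁ (dQ2 q) := fun q =>
    congrArg Subtype.val (DFunLike.congr_fun hf₂ q)
  -- concrete descriptions of the Ext groups
  let KA := P.complex.linearYonedaObj R (ModuleCat.of R (G →ₗ[S] M))
  let SA := KA.sc' 0 1 2
  let e₁ : ext1 R (ModuleCat.of R F) (ModuleCat.of R (G →ₗ[S] M)) ≃+ SA.moduleCatLeftHomologyData.H :=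
    ((P.isoExt 1 (ModuleCat.of R (G →ₗ[S] M))) ≪≫ KA.homologyIsoSc' 0 1 2 (by simp) (by simp)
      ≪≫ SA.moduleCatHomologyIso).toLinearEquiv.toAddEquiv
  let KB := Q.complex.linearYonedaObj S (ModuleCat.of S M)
  let SB := KB.sc' 0 1 2
  let e₂ : ext1 S (ModuleCat.of S (TensorProduct R G F)) (ModuleCat.of S M)
      ≃+ SB.moduleCatLeftHomologyData.H :=
    ((Q.isoExt 1 (ModuleCat.of S M)) ≪≫ KB.homologyIsoSc' 0 1 2 (by simp) (by simp)
      ≪≫ SB.moduleCatHomologyIso).toLinearEquiv.toAddEquiv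
  have hSAg : ∀ u : P.complex.X 1 ⟶ ModuleCat.of R (G →ₗ[S] M),
      ((SA.g.hom u).hom : (P.complex.X 2 : Type u) →ₗ[R] (G →ₗ[S] M)) = u.hom.comp dP2 :=
    fun u => rfl
  have hSBg : ∀ u : Q.complex.X 1 ⟶ ModuleCat.of S M,
      ((SB.g.hom u).hom : (Q.complex.X 2 : Type u) →ₗ[S] M) = u.hom.comp dQ2 := fun u => rfl
  -- the map on cocycles
  have hval : ∀ u : ↥(LinearMap.ker SA.g.hom),
      ModuleCat.ofHom ((unc S G M u.1.hom).comp f₁ : (Q.complex.X 1 : Type u) →ₗ[S] M)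
        ∈ LinearMap.ker SB.g.hom := by
    intro u
    have hu : u.1.hom.comp dP2 = 0 := by
      have h := u.2
      rw [LinearMap.mem_ker] at h
      rw [← hSAg u.1, h]; rfl
    show SB.g.hom (ModuleCat.ofHom ((unc S G M u.1.hom).comp f₁)) = 0
    refine ModuleCat.hom_ext (LinearMap.ext fun q => ?_)
    show unc S G M u.1.hom (f₁ (dQ2 q)) = 0
    rw [← hf₂e q]
    have h2 := DFunLike.congr_fun (unc_comp_lS S G M u.1.hom dP2) (f₂ q)
    rw [show unc S G M u.1.hom (d2S (f₂ q)) =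
        ((unc S G M u.1.hom).comp (lS S G dP2)) (f₂ q) from rfl, h2, hu, unc_zero]
    rfl
  let val : ↥(LinearMap.ker SA.g.hom) → ↥(LinearMap.ker SB.g.hom) := fun u =>
    ⟨ModuleCat.ofHom ((unc S G M u.1.hom).comp f₁), hval u⟩
  have hvaladd : ∀ u v, val (u + v) = val u + val v := by
    intro u v
    apply Subtype.ext
    show ModuleCat.ofHom ((unc S G M (u.1 + v.1).hom).comp f₁)
      = ModuleCat.ofHom ((unc S G M u.1.hom).comp f₁ + (unc S G M v.1.hom).comp f₁)
    exact (congrArg (fun f => ModuleCat.ofHom (LinearMap.comp f f₁))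
      ((congrArg (unc S G M) (ModuleCat.hom_add u.1 v.1)).trans (unc_add S G M _ _))).trans
      (congrArg ModuleCat.ofHom (LinearMap.add_comp ..))
  let tB := SB.moduleCatToCycles
  let Φ₀ : ↥(LinearMap.ker SA.g.hom) →+ SB.moduleCatLeftHomologyData.H :=
    AddMonoidHom.mk' (fun u => (LinearMap.range tB).mkQ (val u))
      (fun u v => by
        show (LinearMap.range tB).mkQ (val (u + v))
          = (LinearMap.range tB).mkQ (val u) + (LinearMap.range tB).mkQ (val v)
        rw [hvaladd, map_add])
  -- it kills coboundaries
  let tA := SA.moduleCatToCycles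
  have hkill : ∀ u ∈ Submodule.restrictScalars ℤ (LinearMap.range tA), Φ₀ u = 0 := by
    intro u hu
    rw [Submodule.restrictScalars_mem, LinearMap.mem_range] at hu
    obtain ⟨w, hw⟩ := hu
    have hw1 : u.1.hom = w.hom.comp dP1 := by
      rw [← hw]; rfl
    show (LinearMap.range tB).mkQ (val u) = 0
    rw [Submodule.mkQ_apply, Submodule.Quotient.mk_eq_zero]
    refine ⟨ModuleCat.ofHom ((unc S G M w.hom).comp f₀), ?_⟩
    apply Subtype.ext
    show ModuleCat.ofHom (((unc S G M w.hom).comp f₀).comp dQ1)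
      = ModuleCat.ofHom ((unc S G M u.1.hom).comp f₁)
    refine ModuleCat.hom_ext (LinearMap.ext fun q => ?_)
    show unc S G M w.hom (f₀ (dQ1 q)) = unc S G M u.1.hom (f₁ q)
    rw [← hf₁e q, hw1]
    exact (DFunLike.congr_fun (unc_comp_lS S G M w.hom dP1) (f₁ q))
  -- descend to the quotient
  let ΦZ : ↥(LinearMap.ker SA.g.hom) →ₗ[ℤ] SB.moduleCatLeftHomologyData.H := Φ₀.toIntLinearMap
  let Φq := Submodule.liftQ (Submodule.restrictScalars ℤ (LinearMap.range tA)) ΦZ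
    (fun u hu => LinearMap.mem_ker.2 (hkill u hu))
  let eA := Submodule.Quotient.restrictScalarsEquiv ℤ (LinearMap.range tA)
  let Φbar : SA.moduleCatLeftHomologyData.H →+ SB.moduleCatLeftHomologyData.H :=
    Φq.toAddMonoidHom.comp eA.symm.toLinearMap.toAddMonoidHom
  have hΦbar_mk : ∀ u, Φbar (Submodule.Quotient.mk u) = Φ₀ u := by
    intro u
    show Φq (eA.symm (Submodule.Quotient.mk u)) = Φ₀ u
    rw [Submodule.Quotient.restrictScalarsEquiv_symm_mk, Submodule.liftQ_apply]
    rfl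
  -- injectivity of `Φbar`
  have hinj : Function.Injective Φbar := by
    rw [injective_iff_map_eq_zero]
    intro a ha
    obtain ⟨u, rfl⟩ := Submodule.Quotient.mk_surjective _ a
    rw [hΦbar_mk] at ha
    have hval0 : val u ∈ LinearMap.range tB := by
      have h : (LinearMap.range tB).mkQ (val u) = 0 := ha
      rwa [Submodule.mkQ_apply, Submodule.Quotient.mk_eq_zero] at h
    obtain ⟨v, hv⟩ := hval0
    let v' : (Q.complex.X 0 : Type u) →ₗ[S] M := v.hom
    have hv1 : v'.comp dQ1 = (unc S G M u.1.hom).comp f₁ :=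
      congrArg (fun x => ModuleCat.Hom.hom x.1) hv
    -- the diagram chase
    set uhat := unc S G M u.1.hom with huhatdef
    have hu2 : u.1.hom.comp dP2 = 0 := by
      have h := u.2
      rw [LinearMap.mem_ker] at h
      rw [← hSAg u.1, h]; rfl
    have huhat2 : ∀ x, uhat (d2S x) = 0 := by
      intro x
      have h2 := DFunLike.congr_fun (unc_comp_lS S G M u.1.hom dP2) x
      rw [show uhat (d2S x) = (uhat.comp (lS S G dP2)) x from rfl, h2, hu2, unc_zero]
      rfl
    have hker : ∀ x, d1S x = 0 → uhat x = 0 := by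
      intro x hx
      obtain ⟨y, hy⟩ := hex1 x hx
      rw [← hy]
      exact huhat2 y
    let Kr : Submodule S (TensorProduct R G (P.complex.X 0)) := LinearMap.range d1S
    have hker' : LinearMap.ker d1S ≤ LinearMap.ker uhat :=
      fun x hx => LinearMap.mem_ker.2 (hker x (LinearMap.mem_ker.1 hx))
    let ubar : Kr →ₗ[S] M :=
      (Submodule.liftQ (LinearMap.ker d1S) uhat hker').comp
        (d1S.quotKerEquivRange.symm.toLinearMap)
    have hubar : ∀ x (h : d1S x ∈ Kr), ubar ⟨d1S x, h⟩ = uhat x := by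
      intro x h
      show (Submodule.liftQ (LinearMap.ker d1S) uhat hker')
        (d1S.quotKerEquivRange.symm ⟨d1S x, h⟩) = uhat x
      rw [LinearMap.quotKerEquivRange_symm_apply_image]
      rfl
    let ψ : ((Q.complex.X 0 : Type u) × Kr) →ₗ[S] TensorProduct R G (P.complex.X 0) :=
      LinearMap.coprod f₀ Kr.subtype
    have hψe : ∀ q (k : Kr), ψ (q, k) = f₀ q + (k : TensorProduct R G (P.complex.X 0)) :=
      fun q k => rfl
    have hψsur : Function.Surjective ψ := by
      intro x
      obtain ⟨q, hq⟩ := hQsur (εS x)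
      have h0 : εS (x - f₀ q) = 0 := by rw [map_sub, hf₀e, hq, sub_self]
      obtain ⟨y, hy⟩ := (hC0 (x - f₀ q)).mp h0
      refine ⟨(q, ⟨x - f₀ q, ⟨y, hy⟩⟩), ?_⟩
      rw [hψe]
      show f₀ q + (x - f₀ q) = x
      abel
    let θ : ((Q.complex.X 0 : Type u) × Kr) →ₗ[S] M :=
      LinearMap.coprod v' ubar
    have hθe : ∀ q (k : Kr), θ (q, k) = v' q + ubar k := fun q k => rfl
    have hθ : ∀ y ∈ LinearMap.ker ψ, y ∈ LinearMap.ker θ := by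
      rintro ⟨q, k⟩ hy
      rw [LinearMap.mem_ker, hψe] at hy
      rw [LinearMap.mem_ker, hθe]
      have hk : (k : TensorProduct R G (P.complex.X 0)) = -(f₀ q) :=
        eq_neg_of_add_eq_zero_right hy
      obtain ⟨y0, hy0⟩ := k.2
      have hεk : εS (k : TensorProduct R G (P.complex.X 0)) = 0 := (hC0 _).mpr ⟨y0, hy0⟩
      have hεf₀q : εQ q = 0 := by
        have hf : f₀ q = -(k : TensorProduct R G (P.complex.X 0)) := by rw [hk, neg_neg]
        rw [← hf₀e q, hf, map_neg, hεk, neg_zero]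
      obtain ⟨q', hq'⟩ := hQker q hεf₀q
      have h1 : v' q = uhat (f₁ q') := by
        rw [← hq']
        exact DFunLike.congr_fun hv1 q'
      have h2 : ubar k = -uhat (f₁ q') := by
        have hkval : (k : TensorProduct R G (P.complex.X 0)) = d1S (-(f₁ q')) := by
          rw [map_neg, hf₁e, hq', hk]
        have hkk : k = (⟨d1S (-(f₁ q')), LinearMap.mem_range_self _ _⟩ : Kr) :=
          Subtype.ext hkval
        rw [hkk, hubar, map_neg]
      rw [h1, h2, add_neg_cancel]
    let w₀ : TensorProduct R G (P.complex.X 0) →ₗ[S] M :=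
      (Submodule.liftQ (LinearMap.ker ψ) θ hθ).comp
        (ψ.quotKerEquivOfSurjective hψsur).symm.toLinearMap
    have hw₀ψ : ∀ y, w₀ (ψ y) = θ y := by
      intro y
      have he : (ψ.quotKerEquivOfSurjective hψsur) (Submodule.Quotient.mk y) = ψ y := by
        simp [LinearMap.quotKerEquivOfSurjective, LinearMap.quotKerEquivRange_apply_mk]
      show Submodule.liftQ _ θ hθ ((ψ.quotKerEquivOfSurjective hψsur).symm (ψ y)) = θ y
      rw [← he, LinearEquiv.symm_apply_apply, Submodule.liftQ_apply]
    have hw₀d : ∀ x, w₀ (d1S x) = uhat x := by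
      intro x
      have hx : d1S x = ψ (0, ⟨d1S x, LinearMap.mem_range_self _ x⟩) := by
        rw [hψe, map_zero, zero_add]
      rw [hx, hw₀ψ, hθe, map_zero, zero_add, hubar]
    let w' := cur S G M w₀
    have hfinal : u.1.hom = w'.comp dP1 := by
      apply unc_injective S G M
      rw [← unc_comp_lS, unc_cur]
      exact LinearMap.ext fun x => (hw₀d x).symm
    refine (Submodule.Quotient.mk_eq_zero _).2 ⟨ModuleCat.ofHom w', ?_⟩
    apply Subtype.ext
    show ModuleCat.ofHom (w'.comp dP1) = u.1
    exact congrArg ModuleCat.ofHom hfinal.symm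
  -- assemble everything
  refine ⟨(e₂.symm.toAddMonoidHom.comp (Φbar.comp e₁.toAddMonoidHom)), ?_⟩
  have : Function.Injective (⇑e₂.symm ∘ ⇑Φbar ∘ ⇑e₁) :=
    e₂.symm.injective.comp (hinj.comp e₁.injective)
  simpa [AddMonoidHom.coe_comp] using this

end
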